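/- A bounded linear operator T : H → Y from a Hilbert space H to a Banach space Y is compact if and only if T maps every orthonormal basis of H into a relatively compact subset of Y. -/

import Mathlib

open Set Metric

/-- Pigeonhole: a sequence with totally bounded range has an infinite index set on which
all values are within `ε` of each other. -/
lemma pigeon_totallyBounded {Y : Type*} [PseudoMetricSpace Y] (f : ℕ → Y)
    (h : TotallyBounded (Set.range f)) {ε : ℝ} (hε : 0 < ε) :
    ∃ s : Set ℕ, s.Infinite ∧ ∀ a ∈ s, ∀ b ∈ s, dist (f a) (f b) < ε := by
  obtain ⟨t, htf, hcover⟩ := (totallyBounded_iff.1 h) (ε / 2) (by positivity)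
  have hmem : ∀ n, ∃ y : t, dist (f n) (y : Y) < ε / 2 := by
    intro n
    have := hcover (Set.mem_range_self n)
    simp only [Set.mem_iUnion, Metric.mem_ball] at this
    obtain ⟨y, hyt, hy⟩ := this
    exact ⟨⟨y, hyt⟩, hy⟩
  choose c hc using hmem
  haveI : Finite t := htf.to_subtype
  obtain ⟨y, hy⟩ := Finite.exists_infinite_fiber c
  refine ⟨c ⁻¹' {y}, Set.infinite_coe_iff.mp hy, ?_⟩
  intro a ha b hb
  have ha' : c a = y := ha
  have hb' : c b = y := hb
  calc dist (f a) (f b) ≤ dist (f a) (y : Y) + dist (f b) (y : Y) := dist_triangle_right _ _ _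
    _ < ε / 2 + ε / 2 := by
        have h1 := hc a; have h2 := hc b
        rw [ha'] at h1; rw [hb'] at h2; linarith
    _ = ε := by ring

set_option maxHeartbeats 2000000 in
theorem compact_iff_image_of_orthonormal_bases_relatively_compact
    {𝕜 H Y : Type*} [RCLike 𝕜] [NormedAddCommGroup H] [InnerProductSpace 𝕜 H]
    [CompleteSpace H] [NormedAddCommGroup Y] [NormedSpace 𝕜 Y] [CompleteSpace Y]
    (T : H →L[𝕜] Y) :
    IsCompact (closure (T '' Metric.closedBall (0 : H) 1)) ↔
      ∀ A : Set H,
        (Orthonormal 𝕜 ((↑) : A → H) ∧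
          ∀ B : Set H, A ⊆ B → Orthonormal 𝕜 ((↑) : B → H) → B = A) →
        IsCompact (closure (T '' A)) := by
  classical
  constructor
  · -- easy direction: an orthonormal set lies in the closed unit ball
    intro hT A hA
    have hsub : A ⊆ Metric.closedBall (0 : H) 1 := by
      intro a ha
      rw [Metric.mem_closedBall, dist_zero_right]
      exact le_of_eq (hA.1.1 ⟨a, ha⟩)
    exact hT.of_isClosed_subset isClosed_closure
      (closure_mono (Set.image_mono hsub))
  · intro h
    suffices htb : TotallyBounded (T '' Metric.closedBall (0 : H) 1) by
      exact htb.closure.isCompact_of_isClosed isClosed_closure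
    by_contra htb
    rw [Metric.totallyBounded_iff] at htb
    push_neg at htb
    obtain ⟨δ, hδ, hnet⟩ := htb
    -- Step 1: a sequence in the unit ball whose images are δ-separated
    have hsep : ∃ x : ℕ → H, (∀ n, x n ∈ Metric.closedBall (0 : H) 1) ∧
        Pairwise (Function.onFun (fun a b => δ ≤ dist (T a) (T b)) x) := by
      haveI : Std.Symm (fun (a b : H) => δ ≤ dist (T a) (T b)) :=
        ⟨fun a b hab => by rwa [dist_comm]⟩
      apply exists_seq_of_forall_finset_exists' (fun v => v ∈ Metric.closedBall (0 : H) 1)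
        (fun a b => δ ≤ dist (T a) (T b))
      intro s _hs
      have hns := hnet (T '' (s : Set H)) (s.finite_toSet.image T)
      rw [Set.not_subset] at hns
      obtain ⟨z, hz, hz2⟩ := hns
      obtain ⟨v, hv, rfl⟩ := hz
      refine ⟨v, hv, fun a ha => ?_⟩
      simp only [Set.mem_iUnion, Metric.mem_ball, not_exists, not_lt] at hz2
      have := hz2 (T a) ⟨a, ha, rfl⟩
      rwa [dist_comm]
    obtain ⟨x, hx1, hx2⟩ := hsep
    have hxnorm : ∀ n, ‖x n‖ ≤ 1 := by
      intro n
      have := hx1 n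
      rwa [Metric.mem_closedBall, dist_zero_right] at this
    -- the operator norm is positive
    have hTpos : 0 < ‖T‖ := by
      have h01 : δ ≤ dist (T (x 0)) (T (x 1)) := hx2 (by norm_num)
      have hd : dist (T (x 0)) (T (x 1)) = ‖T (x 0 - x 1)‖ := by
        rw [dist_eq_norm, ← map_sub]
      have hb : ‖T (x 0 - x 1)‖ ≤ ‖T‖ * ‖x 0 - x 1‖ := T.le_opNorm _
      have hx01 : ‖x 0 - x 1‖ ≤ 2 := by
        calc ‖x 0 - x 1‖ ≤ ‖x 0‖ + ‖x 1‖ := norm_sub_le _ _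
          _ ≤ 2 := by have := hxnorm 0; have := hxnorm 1; linarith
      nlinarith [norm_nonneg (x 0 - x 1), T.opNorm_nonneg]
    set c : ℝ := δ / 6 with hc
    have hcpos : 0 < c := by positivity
    -- Step 2: an orthonormal sequence with `c ≤ ‖T (e n)‖`
    have horth : ∃ e : ℕ → H, (∀ n, ‖e n‖ = 1 ∧ c ≤ ‖T (e n)‖) ∧
        Pairwise (Function.onFun (fun a b => (inner 𝕜 a b : 𝕜) = 0) e) := by
      haveI : Std.Symm (fun (a b : H) => (inner 𝕜 a b : 𝕜) = 0) :=
        ⟨fun a b hab => inner_eq_zero_symm.mp hab⟩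
      apply exists_seq_of_forall_finset_exists' (fun v => ‖v‖ = 1 ∧ c ≤ ‖T v‖)
        (fun a b => (inner 𝕜 a b : 𝕜) = 0)
      intro s _hs
      set K : Submodule 𝕜 H := Submodule.span 𝕜 (s : Set H) with hK
      haveI : FiniteDimensional 𝕜 K := FiniteDimensional.span_of_finite 𝕜 s.finite_toSet
      haveI : ProperSpace K := FiniteDimensional.proper 𝕜 K
      set P := K.orthogonalProjectionOnto with hP
      set ε : ℝ := min (δ / (2 * ‖T‖)) 1 with hε
      have hεpos : 0 < ε := lt_min (by positivity) one_pos
      have hPle : ∀ v : H, ‖(P v : H)‖ ≤ ‖v‖ := by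
        intro v
        calc ‖(P v : H)‖ = ‖P v‖ := rfl
          _ ≤ ‖P‖ * ‖v‖ := (P : H →L[𝕜] K).le_opNorm v
          _ ≤ 1 * ‖v‖ := by
              have := K.orthogonalProjectionOnto_norm_le
              have h0 := norm_nonneg v
              nlinarith
          _ = ‖v‖ := one_mul _
      -- pigeonhole on the projections
      have hq : TotallyBounded (Set.range fun n => P (x n)) := by
        apply TotallyBounded.subset _ (isCompact_closedBall (0 : K) 1).totallyBounded
        rintro _ ⟨n, rfl⟩
        rw [Metric.mem_closedBall, dist_zero_right]
        calc ‖P (x n)‖ = ‖(P (x n) : H)‖ := rfl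
          _ ≤ ‖x n‖ := hPle _
          _ ≤ 1 := hxnorm n
      obtain ⟨I, hI, hIdist⟩ := pigeon_totallyBounded _ hq hεpos
      obtain ⟨n, hn, m, hm, hnm⟩ := hI.nontrivial
      set w : H := x n - x m with hw
      set u : H := w - (P w : H) with hu
      have hu_mem : u ∈ Kᗮ := Submodule.sub_starProjection_mem_orthogonal (K := K) w
      have hPw : ‖(P w : H)‖ < ε := by
        have hmap : (P w : H) = (P (x n) : H) - (P (x m) : H) := by
          rw [hw, map_sub]; rfl
        have hd := hIdist n hn m hm
        rw [hmap]
        calc ‖(P (x n) : H) - (P (x m) : H)‖ = dist (P (x n)) (P (x m)) := by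
              rw [dist_eq_norm]; rfl
          _ < ε := hd
      have hTw : δ ≤ ‖T w‖ := by
        have := hx2 hnm
        rwa [Function.onFun, dist_eq_norm, ← map_sub] at this
      have hεT : ‖T‖ * ε ≤ δ / 2 := by
        have h1 : ε ≤ δ / (2 * ‖T‖) := min_le_left _ _
        rw [le_div_iff₀ (by positivity)] at h1 <;>
        nlinarith
      have hTu : δ / 2 ≤ ‖T u‖ := by
        have hTPw : ‖T (P w : H)‖ ≤ ‖T‖ * ε := by
          calc ‖T (P w : H)‖ ≤ ‖T‖ * ‖(P w : H)‖ := T.le_opNorm _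
            _ ≤ ‖T‖ * ε := by nlinarith
        have h5 : T u = T w - T (P w : H) := map_sub T w ((P w : H))
        have h6 : ‖T w‖ - ‖T (P w : H)‖ ≤ ‖T u‖ := by
          rw [h5]; exact norm_sub_norm_le _ _
        linarith
      have hw2 : ‖w‖ ≤ 2 := by
        calc ‖w‖ ≤ ‖x n‖ + ‖x m‖ := norm_sub_le _ _
          _ ≤ 2 := by have := hxnorm n; have := hxnorm m; linarith
      have hu_norm : ‖u‖ ≤ 3 := by
        have hε1 : ε ≤ 1 := min_le_right _ _
        calc ‖u‖ ≤ ‖w‖ + ‖(P w : H)‖ := norm_sub_le _ _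
          _ ≤ 3 := by linarith
      have hu_pos : 0 < ‖u‖ := by
        rcases eq_or_ne u 0 with h0 | h0
        · rw [h0] at hTu; simp at hTu; linarith
        · exact norm_pos_iff.mpr h0
      refine ⟨(‖u‖ : 𝕜)⁻¹ • u, ⟨?_, ?_⟩, ?_⟩
      · rw [norm_smul, norm_inv, RCLike.norm_ofReal, abs_of_pos hu_pos,
          inv_mul_cancel₀ hu_pos.ne']
      · rw [map_smul, norm_smul, norm_inv, RCLike.norm_ofReal, abs_of_pos hu_pos]
        rw [inv_mul_eq_div, hc]
        rw [div_le_div_iff₀ (by norm_num) hu_pos]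
        nlinarith
      · intro a ha
        rw [inner_smul_right]
        have haK : a ∈ K := Submodule.subset_span ha
        rw [Submodule.inner_right_of_mem_orthogonal haK hu_mem, mul_zero]
    obtain ⟨e, he1, he2⟩ := horth
    have heo : Orthonormal 𝕜 e := by
      rw [orthonormal_iff_ite]
      intro i j
      by_cases hij : i = j
      · subst hij
        simp [inner_self_eq_norm_sq_to_K, (he1 i).1]
      · simp only [hij, if_false]
        exact he2 hij
    -- extend to a maximal orthonormal set
    obtain ⟨A, hA_sub, hA_on, hA_max⟩ := exists_maximal_orthonormal heo.toSubtypeRange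
    have hcomp := h A ⟨hA_on, fun B hB hBon => hA_max B hB hBon⟩
    have htb2 : TotallyBounded (Set.range fun n => T (e n)) := by
      apply TotallyBounded.subset _ hcomp.totallyBounded
      rintro _ ⟨n, rfl⟩
      exact subset_closure ⟨e n, hA_sub ⟨n, rfl⟩, rfl⟩
    -- pigeonhole: many images within c/2 of some z with ‖z‖ ≥ c, then block sums blow up
    obtain ⟨I, hI, hIdist⟩ := pigeon_totallyBounded _ htb2 (half_pos hcpos)
    obtain ⟨a₀, ha₀⟩ := hI.nonempty
    set z : Y := T (e a₀) with hz_def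
    have hz : c ≤ ‖z‖ := (he1 a₀).2
    obtain ⟨n, hn⟩ := exists_nat_gt (4 * ‖T‖ ^ 2 / c ^ 2)
    obtain ⟨t, htI, htcard⟩ := hI.exists_subset_card_eq n
    set w : H := ∑ i ∈ t, e i with hw_def
    have hwnorm : ‖w‖ ^ 2 = (n : ℝ) := by
      have h1 : (inner 𝕜 w w : 𝕜) = (n : 𝕜) := by
        have h2 := heo.inner_sum (fun _ => (1 : 𝕜)) (fun _ => (1 : 𝕜)) t
        simpa [hw_def, htcard] using h2
      have h3 := norm_sq_eq_re_inner (𝕜 := 𝕜) w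
      rw [h1] at h3
      simpa using h3
    have hclose : ∀ i ∈ t, ‖T (e i) - z‖ ≤ c / 2 := by
      intro i hi
      have := hIdist i (htI hi) a₀ ha₀
      rw [dist_eq_norm] at this
      linarith
    have hTw_ge : (n : ℝ) * (c / 2) ≤ ‖T w‖ := by
      have hsum : T w - (n : ℕ) • z = ∑ i ∈ t, (T (e i) - z) := by
        rw [Finset.sum_sub_distrib, hw_def, map_sum, ← htcard, Finset.sum_const]
      have h2 : ‖T w - (n : ℕ) • z‖ ≤ (n : ℝ) * (c / 2) := by
        rw [hsum]
        calc ‖∑ i ∈ t, (T (e i) - z)‖ ≤ ∑ i ∈ t, ‖T (e i) - z‖ := norm_sum_le _ _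
          _ ≤ ∑ _i ∈ t, (c / 2) := Finset.sum_le_sum hclose
          _ = (n : ℝ) * (c / 2) := by rw [Finset.sum_const, htcard, nsmul_eq_mul]
      have h3 : ‖(n : ℕ) • z‖ = (n : ℝ) * ‖z‖ := by
        rw [← Nat.cast_smul_eq_nsmul 𝕜 n z, norm_smul, RCLike.norm_natCast]
      have htri : ‖(n : ℕ) • z‖ ≤ ‖T w‖ + ‖T w - (n : ℕ) • z‖ := by
        have h4 := norm_sub_le (T w) (T w - (n : ℕ) • z)
        rwa [sub_sub_cancel] at h4
      have hnz : (n : ℝ) * c ≤ (n : ℝ) * ‖z‖ := by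
        have : (0 : ℝ) ≤ n := Nat.cast_nonneg n
        nlinarith
      rw [h3] at htri
      linarith
    have hTw_le : ‖T w‖ ≤ ‖T‖ * ‖w‖ := T.le_opNorm w
    -- contradiction
    have hn' : 4 * ‖T‖ ^ 2 < (n : ℝ) * c ^ 2 := by
      rw [div_lt_iff₀ (by positivity)] at hn
      linarith
    have hnpos : 0 < (n : ℝ) := by
      have h0 : (0 : ℝ) ≤ 4 * ‖T‖ ^ 2 / c ^ 2 := by positivity
      linarith
    have hsq : ((n : ℝ) * (c / 2)) ^ 2 ≤ (‖T‖ * ‖w‖) ^ 2 := by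
      have h1 : 0 ≤ (n : ℝ) * (c / 2) := by positivity
      nlinarith
    rw [mul_pow, mul_pow, hwnorm] at hsq
    nlinarith
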